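/- Let k be a field and σ a type. In MvPolynomial (σ × ℕ) k with the derivation d determined by d (X (i, j)) = X (i, j+1), let W be the smallest k-submodule containing all variables X (i, 0) and closed under the product a ∘ b := a * d b. Then W equals the k-span of the set of monomials X (i₁, j₁) * X (i₂, j₂) * ⋯ * X (i_m, j_m) with m ≥ 1, i₁, …, i_m ∈ σ, j₁, …, j_m ∈ ℕ and j₁ + j₂ + ⋯ + j_m = m − 1. -/

import Mathlib

/-- The derivation `d` of the free differential commutative algebra
`MvPolynomial (σ × ℕ) k` with `d (X (i, j)) = X (i, j + 1)`. -/
noncomputable def diffD (k : Type) [Field k] (σ : Type) :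
    Derivation k (MvPolynomial (σ × ℕ) k) (MvPolynomial (σ × ℕ) k) :=
  MvPolynomial.mkDerivation k (fun p : σ × ℕ => MvPolynomial.X (p.1, p.2 + 1))

/-- The smallest `k`-submodule of `MvPolynomial (σ × ℕ) k` containing all the variables
`X (i, 0)` and closed under the Novikov product `a ∘ b = a * d b`: the image of the free
Novikov algebra on `σ` under the Dzhumadildaev–Löfwall embedding. -/
noncomputable def novikovSpan (k : Type) [Field k] (σ : Type) :
    Submodule k (MvPolynomial (σ × ℕ) k) :=
  sInf {W : Submodule k (MvPolynomial (σ × ℕ) k) |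
    (∀ i : σ, MvPolynomial.X ((i, 0) : σ × ℕ) ∈ W) ∧
    ∀ a ∈ W, ∀ b ∈ W, a * diffD k σ b ∈ W}

open MvPolynomial Finset

section Aux

variable {k : Type} [Field k] {σ : Type}

lemma derivation_prod' {R A : Type*} [CommRing R] [CommRing A] [Algebra R A]
    (D : Derivation R A A) {ι : Type*} [DecidableEq ι] (s : Finset ι) (f : ι → A) :
    D (∏ i ∈ s, f i) = ∑ i ∈ s, (∏ j ∈ s.erase i, f j) * D (f i) := by
  induction s using Finset.induction_on with
  | empty => simp
  | @insert a s ha ih =>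
    rw [Finset.prod_insert ha, Derivation.leibniz, smul_eq_mul, smul_eq_mul, ih,
      Finset.mul_sum, Finset.sum_insert ha, Finset.erase_insert ha, add_comm]
    congr 1
    refine Finset.sum_congr rfl fun i hi => ?_
    rw [Finset.erase_insert_of_ne (fun h => ha (by rwa [h])),
      Finset.prod_insert (fun h => ha (Finset.erase_subset _ _ h))]
    ring

lemma diffD_X (p : σ × ℕ) : diffD k σ (X p) = X (p.1, p.2 + 1) :=
  MvPolynomial.mkDerivation_X _ _ _

/-- bump the `t`-th derivative index -/
def bump {n : ℕ} (f : Fin n → σ × ℕ) (t : Fin n) : Fin n → σ × ℕ :=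
  Function.update f t ((f t).1, (f t).2 + 1)

lemma diffD_prod {n : ℕ} (f : Fin n → σ × ℕ) :
    diffD k σ (∏ t, X (f t)) = ∑ t : Fin n, ∏ s, (X (bump f t s) : MvPolynomial (σ × ℕ) k) := by
  rw [derivation_prod']
  refine Finset.sum_congr rfl fun t _ => ?_
  rw [diffD_X, bump]
  rw [Finset.prod_congr rfl fun s _ =>
    Function.apply_update (fun _ p => (X p : MvPolynomial (σ × ℕ) k)) f t ((f t).1, (f t).2 + 1) s,
    Finset.prod_update_of_mem (Finset.mem_univ t), mul_comm, Finset.sdiff_singleton_eq_erase]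

lemma sum_bump {n : ℕ} (f : Fin n → σ × ℕ) (t : Fin n) :
    ∑ s, (bump f t s).2 = (∑ s, (f s).2) + 1 := by
  rw [bump]
  rw [Finset.sum_congr rfl fun s _ =>
    Function.apply_update (fun _ (p : σ × ℕ) => p.2) f t ((f t).1, (f t).2 + 1) s,
    Finset.sum_update_of_mem (Finset.mem_univ t),
    ← Finset.add_sum_erase _ _ (Finset.mem_univ t), Finset.sdiff_singleton_eq_erase]
  omega

lemma novikov_X (i : σ) : (X (i, 0) : MvPolynomial (σ × ℕ) k) ∈ novikovSpan k σ :=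
  Submodule.mem_sInf.2 fun _ hW => hW.1 i

lemma novikov_mul {a b : MvPolynomial (σ × ℕ) k} (ha : a ∈ novikovSpan k σ)
    (hb : b ∈ novikovSpan k σ) : a * diffD k σ b ∈ novikovSpan k σ :=
  Submodule.mem_sInf.2 fun W hW =>
    hW.2 a (Submodule.mem_sInf.1 ha W hW) b (Submodule.mem_sInf.1 hb W hW)

end Aux

section Main

variable {k : Type} [Field k] {σ : Type}

lemma balanced_mem : ∀ (m : ℕ) (ij : Fin m → σ × ℕ), 1 ≤ m →
    (∑ t, (ij t).2) = m - 1 →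
    (∏ t, (X (ij t) : MvPolynomial (σ × ℕ) k)) ∈ novikovSpan k σ := by
  intro m
  induction m using Nat.strong_induction_on with
  | _ m IH =>
  obtain _ | m' := m
  · intro ij h1 _; exact absurd h1 (by norm_num)
  have key : ∀ n : ℕ, ∀ ij : Fin (m' + 1) → σ × ℕ, (∑ t, (ij t).2) = m' →
      (∃ t, 0 < (ij t).2 ∧ (ij t).2 ≤ n) →
      (∏ t, (X (ij t) : MvPolynomial (σ × ℕ) k)) ∈ novikovSpan k σ := by
    intro n
    induction n with
    | zero => rintro ij _ ⟨t, ht, ht'⟩; omega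
    | succ n IHn =>
      rintro ij hsum ⟨t, htpos, htle⟩
      have hm'1 : 1 ≤ m' := by
        have : (ij t).2 ≤ ∑ s', (ij s').2 :=
          Finset.single_le_sum (f := fun s' => (ij s').2) (fun _ _ => Nat.zero_le _)
            (Finset.mem_univ t)
        omega
      by_cases h1 : (ij t).2 = 1
      · -- type A : factor off a first-derivative variable
        rw [Fin.prod_univ_succAbove (fun q => (X (ij q) : MvPolynomial (σ × ℕ) k)) t]
        have hu : (∏ s' : Fin m', (X (ij (t.succAbove s')) : MvPolynomial (σ × ℕ) k))
            ∈ novikovSpan k σ := by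
          apply IH m' (Nat.lt_succ_self m') _ hm'1
          have h2 := Fin.sum_univ_succAbove (fun q => (ij q).2) t
          omega
        have heq : (X (ij t) : MvPolynomial (σ × ℕ) k) * ∏ s' : Fin m', X (ij (t.succAbove s'))
            = (∏ s' : Fin m', (X (ij (t.succAbove s')) : MvPolynomial (σ × ℕ) k))
              * diffD k σ (X ((ij t).1, 0)) := by
          rw [diffD_X, mul_comm]
          have : ij t = ((ij t).1, 1) := by rw [← h1]
          rw [this]
        rw [heq]
        exact novikov_mul hu (novikov_X _)
      · -- main case : (ij t).2 ≥ 2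
        have h2 : 2 ≤ (ij t).2 := by omega
        obtain ⟨s, hst, hs0⟩ : ∃ s, s ≠ t ∧ (ij s).2 = 0 := by
          by_contra hc; push_neg at hc
          have hb : ∀ r ∈ univ.erase t, 1 ≤ (ij r).2 := fun r hr =>
            Nat.one_le_iff_ne_zero.2 (hc r (Finset.mem_erase.1 hr).1)
          have hcard : (univ.erase t).card = m' := by
            rw [Finset.card_erase_of_mem (Finset.mem_univ t), Finset.card_univ,
              Fintype.card_fin]
            omega
          have hge : m' ≤ ∑ r ∈ univ.erase t, (ij r).2 := by
            calc m' = ∑ _r ∈ univ.erase t, 1 := by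
                  rw [Finset.sum_const, hcard, smul_eq_mul, mul_one]
              _ ≤ _ := Finset.sum_le_sum hb
          have hsplit := Finset.add_sum_erase univ (fun r => (ij r).2) (Finset.mem_univ t)
          omega
        obtain ⟨t', ht'⟩ : ∃ t', s.succAbove t' = t := Fin.exists_succAbove_eq hst.symm
        set w : Fin m' → σ × ℕ := fun r => ij (s.succAbove r) with hw
        have hwt' : w t' = ij t := by rw [hw]; simp only; rw [ht']
        have hwsum : ∑ r, (w r).2 = m' := by
          have h3 := Fin.sum_univ_succAbove (fun q => (ij q).2) s
          simp only [hw]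
          omega
        set v : Fin m' → σ × ℕ := Function.update w t' ((w t').1, (w t').2 - 1) with hv
        have hvt' : v t' = ((ij t).1, (ij t).2 - 1) := by
          rw [hv, Function.update_self, hwt']
        have hvsum : ∑ r, (v r).2 = m' - 1 := by
          rw [hv, Finset.sum_congr rfl fun r _ =>
            Function.apply_update (fun _ (p : σ × ℕ) => p.2) w t' ((w t').1, (w t').2 - 1) r,
            Finset.sum_update_of_mem (Finset.mem_univ t'), Finset.sdiff_singleton_eq_erase]
          have h4 := Finset.add_sum_erase univ (fun r => (w r).2) (Finset.mem_univ t')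
          have h5 : (w t').2 = (ij t).2 := by rw [hwt']
          omega
        have hv_mem : (∏ r, (X (v r) : MvPolynomial (σ × ℕ) k)) ∈ novikovSpan k σ :=
          IH m' (Nat.lt_succ_self m') v hm'1 hvsum
        have hmain : (X ((ij s).1, 0) : MvPolynomial (σ × ℕ) k)
            * diffD k σ (∏ r, X (v r)) ∈ novikovSpan k σ :=
          novikov_mul (novikov_X _) hv_mem
        rw [diffD_prod, Finset.mul_sum] at hmain
        have hsplit := Finset.add_sum_erase univ
          (fun r => (X ((ij s).1, 0) : MvPolynomial (σ × ℕ) k) * ∏ q, X (bump v r q))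
          (Finset.mem_univ t')
        have hterm : (X ((ij s).1, 0) : MvPolynomial (σ × ℕ) k) * ∏ q, X (bump v t' q)
            = ∏ q : Fin (m' + 1), X (ij q) := by
          have hbv : bump v t' = w := by
            funext r
            rcases eq_or_ne r t' with rfl | hr
            · rw [bump, Function.update_self, hvt', hwt']
              have : (ij t).2 - 1 + 1 = (ij t).2 := by omega
              simp only [this]
            · rw [bump, Function.update_of_ne hr, hv, Function.update_of_ne hr]
          rw [hbv, Fin.prod_univ_succAbove (fun q => (X (ij q) : MvPolynomial (σ × ℕ) k)) s]
          have : ij s = ((ij s).1, 0) := by rw [← hs0]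
          rw [← this]
        have hcross : ∀ r ∈ univ.erase t',
            (X ((ij s).1, 0) : MvPolynomial (σ × ℕ) k) * ∏ q, X (bump v r q)
              ∈ novikovSpan k σ := by
          intro r hr
          have hrt : r ≠ t' := (Finset.mem_erase.1 hr).1
          set g : Fin (m' + 1) → σ × ℕ := s.insertNth ((ij s).1, 0) (bump v r) with hg
          have hgs : g s = ((ij s).1, 0) := by rw [hg]; exact Fin.insertNth_apply_same _ _ _
          have hgsa : ∀ q, g (s.succAbove q) = bump v r q := fun q => by
            rw [hg]; exact Fin.insertNth_apply_succAbove _ _ _ _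
          have hprod : (∏ q : Fin (m' + 1), (X (g q) : MvPolynomial (σ × ℕ) k))
              = X ((ij s).1, 0) * ∏ q, X (bump v r q) := by
            rw [Fin.prod_univ_succAbove (fun q => (X (g q) : MvPolynomial (σ × ℕ) k)) s, hgs]
            congr 1
            exact Finset.prod_congr rfl fun q _ => by rw [hgsa q]
          rw [← hprod]
          apply IHn g
          · have h4 := Fin.sum_univ_succAbove (fun q => (g q).2) s
            have h5 : ∑ q, (bump v r q).2 = (∑ q, (v q).2) + 1 := sum_bump v r
            have h6 : ∑ q, (g (s.succAbove q)).2 = ∑ q, (bump v r q).2 :=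
              Finset.sum_congr rfl fun q _ => by rw [hgsa q]
            have h7 : (g s).2 = 0 := by rw [hgs]
            omega
          · refine ⟨s.succAbove t', ?_, ?_⟩
            · have hgval : g (s.succAbove t') = ((ij t).1, (ij t).2 - 1) := by
                rw [hgsa t', bump, Function.update_of_ne hrt.symm, hvt']
              rw [hgval]; simp only; omega
            · have hgval : g (s.succAbove t') = ((ij t).1, (ij t).2 - 1) := by
                rw [hgsa t', bump, Function.update_of_ne hrt.symm, hvt']
              rw [hgval]; simp only; omega
        have hsplit2 : (X ((ij s).1, 0) : MvPolynomial (σ × ℕ) k) * (∏ q, X (bump v t' q)) +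
            ∑ x ∈ univ.erase t', (X ((ij s).1, 0) : MvPolynomial (σ × ℕ) k)
              * ∏ q, X (bump v x q) =
            ∑ x : Fin m', (X ((ij s).1, 0) : MvPolynomial (σ × ℕ) k)
              * ∏ q, X (bump v x q) := hsplit
        rw [hterm] at hsplit2
        rw [eq_sub_of_add_eq hsplit2]
        exact Submodule.sub_mem _ hmain (Submodule.sum_mem _ hcross)
  intro ij _ hsum
  have hsum' : ∑ t, (ij t).2 = m' := by omega
  rcases Nat.eq_zero_or_pos m' with rfl | hm'
  · have h0 : (ij 0).2 = 0 := by
      have := hsum'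
      rwa [Fin.sum_univ_one] at this
    rw [Fin.prod_univ_one]
    have heq0 : X (ij 0) = (X ((ij 0).1, 0) : MvPolynomial (σ × ℕ) k) := by
      congr 1
      exact Prod.ext rfl h0
    rw [heq0]
    exact novikov_X _
  · obtain ⟨t, ht⟩ : ∃ t, 0 < (ij t).2 := by
      by_contra hc; push_neg at hc
      have : ∑ t, (ij t).2 = 0 := Finset.sum_eq_zero fun t _ => Nat.le_zero.1 (hc t)
      omega
    refine key m' ij hsum' ⟨t, ht, ?_⟩
    have : (ij t).2 ≤ ∑ s', (ij s').2 :=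
      Finset.single_le_sum (f := fun s' => (ij s').2) (fun _ _ => Nat.zero_le _)
        (Finset.mem_univ t)
    omega

end Main


/-- The image of the free Novikov algebra inside the free differential commutative algebra
is spanned by the monomials `X (i₁, j₁) ⋯ X (i_m, j_m)` with `m ≥ 1` and
`j₁ + ⋯ + j_m = m - 1`. -/
theorem novikovSpan_eq_span_of_balanced_monomials
    (k : Type) [Field k] (σ : Type) :
    novikovSpan k σ = Submodule.span k
      {x : MvPolynomial (σ × ℕ) k |
        ∃ m : ℕ, 1 ≤ m ∧ ∃ ij : Fin m → σ × ℕ,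
          (∑ t : Fin m, (ij t).2) = m - 1 ∧
          x = ∏ t : Fin m, MvPolynomial.X (ij t)} := by
  apply le_antisymm
  · refine sInf_le ⟨?_, ?_⟩
    · intro i
      apply Submodule.subset_span
      refine ⟨1, le_refl 1, fun _ => (i, 0), by simp, by simp⟩
    · intro a ha b hb
      induction ha using Submodule.span_induction with
      | mem x hx =>
        induction hb using Submodule.span_induction with
        | mem y hy =>
          obtain ⟨m, hm, f, hfsum, rfl⟩ := hx
          obtain ⟨n, hn, g, hgsum, rfl⟩ := hy
          rw [diffD_prod, Finset.mul_sum]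
          refine Submodule.sum_mem _ fun r _ => Submodule.subset_span ?_
          refine ⟨m + n, by omega, Fin.append f (bump g r), ?_, ?_⟩
          · rw [Fin.sum_univ_add]
            simp only [Fin.append_left, Fin.append_right]
            have := sum_bump g r
            omega
          · rw [Fin.prod_univ_add]
            simp only [Fin.append_left, Fin.append_right]
        | zero => rw [map_zero, mul_zero]; exact Submodule.zero_mem _
        | add b c hbmem hcmem ihb ihc =>
          rw [map_add, mul_add]; exact Submodule.add_mem _ ihb ihc
        | smul c b hbmem ihb =>
          rw [Derivation.map_smul, mul_smul_comm]; exact Submodule.smul_mem _ _ ihb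
      | zero => rw [zero_mul]; exact Submodule.zero_mem _
      | add a c hamem hcmem iha ihc =>
        rw [add_mul]; exact Submodule.add_mem _ iha ihc
      | smul c a hamem iha =>
        rw [smul_mul_assoc]; exact Submodule.smul_mem _ _ iha
  · rw [Submodule.span_le]
    rintro x ⟨m, hm, ij, hsum, rfl⟩
    exact balanced_mem m ij hm hsum
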